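/- Let (M,d) be a compact metric space and let φ be an expansive (k*-expansive) flow on M. Then the set of singularities of φ, i.e. the set {σ ∈ M : φ(t,σ) = σ for all t ∈ ℝ}, is finite. -/
import Mathlib


/-- `Rep`: increasing homeomorphisms `h : ℝ → ℝ` with `h 0 = 0`.  (A strictly monotone
bijection of `ℝ` is automatically a homeomorphism.) -/
def IsRep (h : ℝ → ℝ) : Prop :=
  StrictMono h ∧ Function.Bijective h ∧ h 0 = 0

/-- A flow `φ` on a metric space is expansive (`k*`-expansive) if for every `ε > 0` there is
`δ > 0` such that whenever `x, y` and `h ∈ Rep` satisfy `d(φ t x, φ (h t) y) ≤ δ` for all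
`t ∈ ℝ`, there is `t₀ ∈ ℝ` with `φ (h t₀) y ∈ φ_{[t₀ - ε, t₀ + ε]}(x)`. -/
def IsExpansiveFlow {M : Type*} [MetricSpace M] (φ : Flow ℝ M) : Prop :=
  ∀ ε > (0 : ℝ), ∃ δ > (0 : ℝ), ∀ (x y : M) (h : ℝ → ℝ), IsRep h →
    (∀ t : ℝ, dist (φ t x) (φ (h t) y) ≤ δ) →
    ∃ t₀ : ℝ, φ (h t₀) y ∈ (fun t : ℝ => φ t x) '' Set.Icc (t₀ - ε) (t₀ + ε)

/-- If `φ` is an expansive flow on a compact metric space `M`, then the set of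
singularities of `φ` is finite. -/
theorem singularities_finite_of_expansiveFlow {M : Type*} [MetricSpace M] [CompactSpace M]
    (φ : Flow ℝ M) (hexp : IsExpansiveFlow φ) :
    {σ : M | ∀ t : ℝ, φ t σ = σ}.Finite := by
  set S := {σ : M | ∀ t : ℝ, φ t σ = σ} with hS
  obtain ⟨δ, hδ, hkey⟩ := hexp 1 one_pos
  -- any two singularities within distance δ are equal
  have sep : ∀ y ∈ S, ∀ z ∈ S, dist y z ≤ δ → y = z := by
    intro y hy z hz hd
    have hrep : IsRep id := ⟨strictMono_id, Function.bijective_id, rfl⟩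
    obtain ⟨t₀, s, _, hs⟩ := hkey y z id hrep (fun t => by
      simp only [id_eq, hy t, hz t]; exact hd)
    simp only [id_eq, hz t₀, hy s] at hs
    exact hs
  by_contra hinf
  replace hinf : S.Infinite := hinf
  obtain ⟨x, hx⟩ := hinf.exists_accPt_principal
  rw [accPt_iff_nhds] at hx
  obtain ⟨y, ⟨hyb, hyS⟩, hyx⟩ := hx (Metric.ball x (δ / 2)) (Metric.ball_mem_nhds x (by linarith))
  obtain ⟨z, ⟨hzb, hzS⟩, hzx⟩ := hx (Metric.ball x (δ / 2) ∩ {y}ᶜ)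
    (Filter.inter_mem (Metric.ball_mem_nhds x (by linarith))
      (isOpen_compl_singleton.mem_nhds (by simpa using hyx.symm)))
  refine hzb.2 ?_
  refine (sep y hyS z hzS ?_).symm
  have := dist_triangle y x z
  rw [Metric.mem_ball, dist_comm] at hyb
  have hzb' : dist x z < δ / 2 := by
    have := hzb.1; rwa [Metric.mem_ball, dist_comm] at this
  linarith [dist_comm y x]
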